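/- Let s > 2 and let t_1,…,t_s be nonnegative integers with t_1 ≥ 1. The binary code Φ(H^{t_1,…,t_s}) is linear if and only if t_1 = 1, t_i = 0 for all 2 ≤ i ≤ s−2, and t_{s−1} ∈ {0,1}; i.e., the only linear Z_{2^s}-linear Hadamard codes are those of type (1,0,…,0,t_s) and (1,0,…,0,1,t_s) with t_s ≥ 0. -/

import Mathlib

/-- The `i`-th digit of the binary expansion of `u : ZMod (2^s)`. -/
def gdigit (s : ℕ) (u : ZMod (2^s)) (i : ℕ) : ZMod 2 :=
  if (ZMod.val u).testBit i then 1 else 0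

/-- Carlet's generalized Gray map `φ : ZMod (2^s) → (Z_2^{s-1} → Z_2)`:
the coordinate indexed by `y ∈ Z_2^{s-1}` is `u_{s-1} + ∑ u_i y_i`. -/
def gray (s : ℕ) (u : ZMod (2^s)) : (Fin (s - 1) → ZMod 2) → ZMod 2 :=
  fun y => gdigit s u (s - 1) + ∑ i : Fin (s - 1), gdigit s u (i : ℕ) * y i

/-- The coordinatewise extension `Φ` of the Gray map, on vectors indexed by `ι`. -/
def PhiMap {ι : Type} (s : ℕ) (u : ι → ZMod (2^s)) :
    ι × (Fin (s - 1) → ZMod 2) → ZMod 2 :=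
  fun p => gray s (u p.1) p.2

/-- A binary code is linear if it is closed under addition. -/
def IsLinearCode {V : Type} [Add V] (C : Set V) : Prop :=
  ∀ x ∈ C, ∀ y ∈ C, x + y ∈ C

/-- `τ = t_1 + ⋯ + t_s`, the number of rows of the generator matrix. -/
def tauSum (s : ℕ) (t : ℕ → ℕ) : ℕ := ∑ i ∈ Finset.Icc 1 s, t i

/-- `T_i = {j·2^{i-1} : 0 ≤ j ≤ 2^{s-i+1}-1} ⊆ ZMod (2^s)` (here `i` is 1-based). -/
def Tset (s i : ℕ) : Set (ZMod (2^s)) :=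
  {x | ∃ j : ℕ, j < 2 ^ (s - i + 1) ∧ x = (j : ZMod (2^s)) * 2 ^ (i - 1)}

/-- The block (1-based) containing the 1-based row position `p`:
the least `i ≥ 1` with `p ≤ t_1 + ⋯ + t_i`. -/
noncomputable def blockIdx (t : ℕ → ℕ) (p : ℕ) : ℕ :=
  sInf {i : ℕ | 1 ≤ i ∧ p ≤ ∑ j ∈ Finset.Icc 1 i, t j}

/-- A column of the generator matrix `A^{t_1,…,t_s}`: an element of
`{1} × T_1^{t_1-1} × T_2^{t_2} × ⋯ × T_s^{t_s}`. -/
def IsHadCol (s : ℕ) (t : ℕ → ℕ) (z : Fin (tauSum s t) → ZMod (2^s)) : Prop :=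
  (∀ q : Fin (tauSum s t), (q : ℕ) = 0 → z q = 1) ∧
  (∀ q : Fin (tauSum s t), 1 ≤ (q : ℕ) → z q ∈ Tset s (blockIdx t ((q : ℕ) + 1)))

/-- The type indexing the columns of `A^{t_1,…,t_s}` (hence the coordinates of the code). -/
abbrev ColIdx (s : ℕ) (t : ℕ → ℕ) : Type :=
  {z : Fin (tauSum s t) → ZMod (2^s) // IsHadCol s t z}

noncomputable instance (s : ℕ) (t : ℕ → ℕ) : Fintype (ColIdx s t) :=
  Fintype.ofFinite _

/-- The `Z_{2^s}`-additive Hadamard code `H^{t_1,…,t_s}`: the subgroup generated by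
the rows of `A^{t_1,…,t_s}` (row `q` sends the column `z` to its `q`-th entry). -/
def hadamardCode (s : ℕ) (t : ℕ → ℕ) : AddSubgroup (ColIdx s t → ZMod (2^s)) :=
  AddSubgroup.closure (Set.range (fun (q : Fin (tauSum s t)) => fun z : ColIdx s t => z.val q))


instance two_pow_neZero (s : ℕ) : NeZero (2^s) := ⟨pow_ne_zero _ two_ne_zero⟩

lemma testBit_div_pow (x j i : ℕ) : (x / 2^j).testBit i = x.testBit (j + i) := by
  rw [Nat.testBit, Nat.shiftRight_eq_div_pow, Nat.testBit, Nat.shiftRight_eq_div_pow,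
    Nat.div_div_eq_div_mul, ← pow_add]

lemma xor_mod_pow (k n m : ℕ) : (n ^^^ m) % 2^k = (n % 2^k) ^^^ (m % 2^k) := by
  apply Nat.eq_of_testBit_eq; intro i
  simp [Nat.testBit_mod_two_pow, Nat.testBit_xor, Bool.and_xor_distrib_left]

lemma xor_div_pow (k n m : ℕ) : (n ^^^ m) / 2^k = (n / 2^k) ^^^ (m / 2^k) := by
  apply Nat.eq_of_testBit_eq; intro i
  simp [testBit_div_pow, Nat.testBit_xor]

lemma xorSplit (k n m : ℕ) :
    n ^^^ m = ((n % 2^k) ^^^ (m % 2^k)) + 2^k * ((n / 2^k) ^^^ (m / 2^k)) := by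
  conv_lhs => rw [← Nat.mod_add_div (n ^^^ m) (2^k)]
  rw [xor_mod_pow, xor_div_pow]

lemma mulpow_xor (k a b : ℕ) : (a * 2^k) ^^^ (b * 2^k) = (a ^^^ b) * 2^k := by
  rw [xorSplit k (a * 2^k) (b * 2^k), Nat.mul_mod_left, Nat.mul_mod_left,
    Nat.mul_div_cancel _ (by positivity), Nat.mul_div_cancel _ (by positivity)]
  simp [mul_comm]

def zxor (s : ℕ) (u v : ZMod (2^s)) : ZMod (2^s) := ((u.val ^^^ v.val : ℕ) : ZMod (2^s))

lemma zxor_val {s : ℕ} (u v : ZMod (2^s)) : (zxor s u v).val = u.val ^^^ v.val :=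
  ZMod.val_cast_of_lt (Nat.xor_lt_two_pow u.val_lt v.val_lt)

lemma zxor_natCast {s : ℕ} {m n : ℕ} (hm : m < 2^s) (hn : n < 2^s) :
    zxor s ((m : ZMod (2^s))) ((n : ZMod (2^s))) = ((m ^^^ n : ℕ) : ZMod (2^s)) := by
  unfold zxor
  rw [ZMod.val_cast_of_lt hm, ZMod.val_cast_of_lt hn]

lemma zxor_self {s : ℕ} (u : ZMod (2^s)) : zxor s u u = 0 := by
  unfold zxor; simp

lemma zxor_zero {s : ℕ} (u : ZMod (2^s)) : zxor s u 0 = u := by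
  unfold zxor; simp [ZMod.val_zero, ZMod.natCast_rightInverse u]

lemma zxor_zero' {s : ℕ} (u : ZMod (2^s)) : zxor s 0 u = u := by
  unfold zxor; simp [ZMod.val_zero, ZMod.natCast_rightInverse u]

-- gray lemmas
lemma gdigit_zxor (s : ℕ) (u v : ZMod (2^s)) (i : ℕ) :
    gdigit s (zxor s u v) i = gdigit s u i + gdigit s v i := by
  unfold gdigit
  rw [zxor_val, Nat.testBit_xor]
  cases h1 : u.val.testBit i <;> cases h2 : v.val.testBit i <;> simp <;> decide

lemma gray_zxor (s : ℕ) (u v : ZMod (2^s)) (y : Fin (s-1) → ZMod 2) :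
    gray s u y + gray s v y = gray s (zxor s u v) y := by
  simp only [gray, gdigit_zxor, add_mul, Finset.sum_add_distrib]
  ring

lemma gdigit_eq_of_ge (s : ℕ) (u : ZMod (2^s)) (i : ℕ) (hi : s ≤ i) : gdigit s u i = 0 := by
  unfold gdigit
  rw [Nat.testBit_lt_two_pow (lt_of_lt_of_le u.val_lt (Nat.pow_le_pow_right (by norm_num) hi))]
  simp

lemma gray_injective (s : ℕ) (hs : 1 ≤ s) : Function.Injective (gray s) := by
  intro u v h
  have htop : gdigit s u (s-1) = gdigit s v (s-1) := by
    have := congrFun h 0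
    simpa [gray] using this
  have hbit : ∀ i : Fin (s-1), gdigit s u (i : ℕ) = gdigit s v (i : ℕ) := by
    intro i
    have := congrFun h (Pi.single i 1)
    simp only [gray, Pi.single_apply, mul_ite, mul_one, mul_zero, Finset.sum_ite_eq',
      Finset.mem_univ, if_true] at this
    have h2 := this
    rw [htop] at h2
    exact add_left_cancel h2
  have hdig : ∀ i : ℕ, gdigit s u i = gdigit s v i := by
    intro i
    rcases lt_trichotomy i (s-1) with hlt | heq | hgt
    · exact hbit ⟨i, hlt⟩
    · subst heq; exact htop
    · exact (gdigit_eq_of_ge s u i (by omega)).trans (gdigit_eq_of_ge s v i (by omega)).symm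
  have hval : u.val = v.val := by
    apply Nat.eq_of_testBit_eq
    intro i
    have := hdig i
    unfold gdigit at this
    cases h1 : u.val.testBit i <;> cases h2 : v.val.testBit i <;>
      simp [h1, h2] at this ⊢ <;> exact absurd this (by decide)
  exact ZMod.val_injective _ hval

-- ===== top-bit lemmas =====
lemma flip_nat {s : ℕ} (hs : 1 ≤ s) {n : ℕ} (hn : n < 2^s) :
    ((n ^^^ 2^(s-1) : ℕ) : ZMod (2^s)) = (n : ZMod (2^s)) + 2^(s-1) := by
  have hss : s - 1 + 1 = s := by omega
  have h2 : 2^(s-1) + 2^(s-1) = 2^s := by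
    rw [← two_mul, ← pow_succ', hss]
  have hsplit := xorSplit (s-1) n (2^(s-1))
  rw [Nat.mod_self, Nat.div_self (by positivity)] at hsplit
  have hdiv : n / 2^(s-1) < 2 := by
    apply Nat.div_lt_of_lt_mul; omega
  have hmod : n % 2^(s-1) + 2^(s-1) * (n / 2^(s-1)) = n := Nat.mod_add_div n _
  interval_cases h : n / 2^(s-1)
  · -- top bit 0 : n = n % 2^(s-1)
    simp only [Nat.xor_zero, mul_zero, add_zero] at hmod hsplit
    rw [hsplit]
    have : (0 : ℕ) ^^^ 1 = 1 := by decide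
    rw [this]
    push_cast
    rw [hmod]
    ring
  · simp only [mul_one] at hmod
    have : (1 : ℕ) ^^^ 1 = 0 := by decide
    rw [this] at hsplit
    simp only [mul_zero, add_zero, Nat.xor_zero] at hsplit
    rw [hsplit]
    conv_rhs => rw [← hmod]
    push_cast
    have hz : ((2:ZMod (2^s)))^(s-1) + 2^(s-1) = 0 := by
      calc ((2:ZMod (2^s)))^(s-1) + 2^(s-1) = ((2^(s-1) + 2^(s-1) : ℕ) : ZMod (2^s)) := by
            push_cast; ring
      _ = ((2^s : ℕ) : ZMod (2^s)) := by rw [h2]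
      _ = 0 := ZMod.natCast_self _
    linear_combination -hz

lemma zxor_add_top {s : ℕ} (hs : 1 ≤ s) (u v : ZMod (2^s)) :
    zxor s (u + 2^(s-1)) v = zxor s u v + 2^(s-1) := by
  have hval : (u + 2^(s-1)).val = u.val ^^^ 2^(s-1) := by
    have h1 : ((u.val ^^^ 2^(s-1) : ℕ) : ZMod (2^s)) = u + 2^(s-1) := by
      rw [flip_nat hs u.val_lt, ZMod.natCast_rightInverse u]
    rw [← h1, ZMod.val_cast_of_lt]
    exact Nat.xor_lt_two_pow u.val_lt (by
      have : s - 1 < s := by omega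
      exact Nat.pow_lt_pow_right (by norm_num) this)
  unfold zxor
  rw [hval]
  have hcomm : (u.val ^^^ 2^(s-1)) ^^^ v.val = (u.val ^^^ v.val) ^^^ 2^(s-1) := by
    rw [Nat.xor_assoc, Nat.xor_comm (2^(s-1)), ← Nat.xor_assoc]
  rw [hcomm, flip_nat hs (Nat.xor_lt_two_pow u.val_lt v.val_lt)]

lemma zxor_comm {s : ℕ} (u v : ZMod (2^s)) : zxor s u v = zxor s v u := by
  unfold zxor; rw [Nat.xor_comm]

lemma top_mul (s : ℕ) (hs : 1 ≤ s) (e : ZMod (2^s)) :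
    (2^(s-1) : ZMod (2^s)) * e = 0 ∨ (2^(s-1) : ZMod (2^s)) * e = 2^(s-1) := by
  have he : e = ((e.val : ℕ) : ZMod (2^s)) := (ZMod.natCast_rightInverse e).symm
  have h2 : ((2:ZMod (2^s)))^(s-1) * 2 = 0 := by
    have : ((2^s : ℕ) : ZMod (2^s)) = 0 := ZMod.natCast_self _
    have hss : s - 1 + 1 = s := by omega
    calc (2:ZMod (2^s))^(s-1) * 2 = 2^(s-1+1) := by rw [pow_succ]
    _ = ((2^s : ℕ) : ZMod (2^s)) := by rw [hss]; push_cast; ring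
    _ = 0 := this
  rcases Nat.even_or_odd e.val with ⟨k, hk⟩ | ⟨k, hk⟩
  · left
    rw [he, hk]
    push_cast
    linear_combination (k : ZMod (2^s)) * h2
  · right
    rw [he, hk]
    push_cast
    linear_combination (k : ZMod (2^s)) * h2

lemma zxor_top {s : ℕ} (hs : 1 ≤ s) (u v e e' : ZMod (2^s)) :
    zxor s (u + 2^(s-1) * e) (v + 2^(s-1) * e') = zxor s u v + 2^(s-1) * e + 2^(s-1) * e' := by
  have key : ∀ w x f : ZMod (2^s), zxor s (w + 2^(s-1) * f) x = zxor s w x + 2^(s-1) * f := by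
    intro w x f
    rcases top_mul s hs f with h | h
    · rw [h, add_zero, add_zero]
    · rw [h, zxor_add_top hs]
  rw [key, zxor_comm, key, zxor_comm]
  ring

-- ===== the Z4 fact and its lift =====
lemma fact4 : ∀ a b d e : Fin 4, ∃ g f : Fin 4, ∀ k : Fin 4,
    ((a.val + d.val * k.val) % 4) ^^^ ((b.val + e.val * k.val) % 4)
      = (g.val + f.val * k.val) % 4 := by decide

lemma pow_split {s : ℕ} (hs : 2 < s) : (2:ℕ)^(s-2) * 4 = 2^s := by
  have h : s - 2 + 2 = s := by omega
  calc (2:ℕ)^(s-2) * 4 = 2^(s-2+2) := by rw [pow_add]; norm_num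
  _ = 2^s := by rw [h]

lemma nat_add_mul_mod {P M n m : ℕ} (hP : 0 < P) (hM : P * 4 = M) :
    (n + m * P) % M = n % P + P * ((n / P + m) % 4) := by
  subst hM
  have hlo : n % P < P := Nat.mod_lt _ hP
  have hrw : n + m * P = n % P + P * (n / P + m) := by
    conv_lhs => rw [← Nat.mod_add_div n P]
    ring
  rw [hrw, Nat.add_mod, Nat.mul_mod_mul_left, Nat.mod_eq_of_lt (a := n % P) (by nlinarith)]
  have hr : (n / P + m) % 4 < 4 := Nat.mod_lt _ (by norm_num)
  have : P * ((n / P + m) % 4) ≤ P * 3 := Nat.mul_le_mul_left _ (by omega)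
  exact Nat.mod_eq_of_lt (by omega)

lemma val_add_mul {s : ℕ} (hs : 2 < s) (u : ZMod (2^s)) (m : ℕ) :
    (u + (m : ZMod (2^s)) * 2^(s-2)).val
      = u.val % 2^(s-2) + 2^(s-2) * ((u.val / 2^(s-2) + m) % 4) := by
  have hP4 := pow_split hs
  have hu : u + (m : ZMod (2^s)) * 2^(s-2) = ((u.val + m * 2^(s-2) : ℕ) : ZMod (2^s)) := by
    push_cast
    rw [ZMod.natCast_rightInverse u]
  rw [hu, ZMod.val_natCast]
  exact nat_add_mul_mod (by positivity) hP4

lemma keyB {s : ℕ} (hs : 2 < s) (α β dA dB : ZMod (2^s)) :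
    ∃ γ δ : ZMod (2^s), ∀ x ∈ Tset s (s-1),
      zxor s (α + dA * x) (β + dB * x) = γ + δ * x := by
  have hP4 := pow_split hs
  have hA : α.val / 2^(s-2) < 4 := Nat.div_lt_of_lt_mul (by rw [hP4]; exact α.val_lt)
  have hB : β.val / 2^(s-2) < 4 := Nat.div_lt_of_lt_mul (by rw [hP4]; exact β.val_lt)
  obtain ⟨g, f, hgf⟩ := fact4 ⟨_, hA⟩ ⟨_, hB⟩ ⟨dA.val % 4, Nat.mod_lt _ (by norm_num)⟩
    ⟨dB.val % 4, Nat.mod_lt _ (by norm_num)⟩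
  refine ⟨((α.val % 2^(s-2)) ^^^ (β.val % 2^(s-2)) : ℕ) + 2^(s-2) * (g.val : ℕ),
    ((f.val : ℕ) : ZMod (2^s)), ?_⟩
  rintro x ⟨j, hj, rfl⟩
  have hj4 : j < 4 := by
    have h2 : s - (s-1) + 1 = 2 := by omega
    rw [h2] at hj
    norm_num at hj
    exact hj
  have hii : (s-1) - 1 = s - 2 := by omega
  rw [hii]
  have hmul : ∀ d : ZMod (2^s), d * ((j : ZMod (2^s)) * 2^(s-2))
      = ((d.val * j : ℕ) : ZMod (2^s)) * 2^(s-2) := by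
    intro d
    push_cast
    rw [ZMod.natCast_rightInverse d]
    ring
  have hval1 : (α + dA * ((j : ZMod (2^s)) * 2^(s-2))).val
      = α.val % 2^(s-2) + 2^(s-2) * ((α.val / 2^(s-2) + dA.val * j) % 4) := by
    rw [hmul dA]; exact val_add_mul hs α (dA.val * j)
  have hval2 : (β + dB * ((j : ZMod (2^s)) * 2^(s-2))).val
      = β.val % 2^(s-2) + 2^(s-2) * ((β.val / 2^(s-2) + dB.val * j) % 4) := by
    rw [hmul dB]; exact val_add_mul hs β (dB.val * j)
  have hloA : α.val % 2^(s-2) < 2^(s-2) := Nat.mod_lt _ (by positivity)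
  have hloB : β.val % 2^(s-2) < 2^(s-2) := Nat.mod_lt _ (by positivity)
  have hmod : ∀ l h : ℕ, l < 2^(s-2) → (l + 2^(s-2) * h) % 2^(s-2) = l := by
    intro l h hl
    rw [Nat.add_mul_mod_self_left]
    exact Nat.mod_eq_of_lt hl
  have hdiv : ∀ l h : ℕ, l < 2^(s-2) → (l + 2^(s-2) * h) / 2^(s-2) = h := by
    intro l h hl
    rw [Nat.add_mul_div_left _ _ (by positivity : 0 < (2:ℕ)^(s-2)), Nat.div_eq_of_lt hl, zero_add]
  unfold zxor
  rw [hval1, hval2, xorSplit (s-2), hmod _ _ hloA, hmod _ _ hloB, hdiv _ _ hloA, hdiv _ _ hloB]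
  have hX : (α.val / 2^(s-2) + dA.val * j) % 4 = (α.val / 2^(s-2) + dA.val % 4 * j) % 4 :=
    (((Nat.mod_modEq dA.val 4).mul_right j).add_left (α.val / 2^(s-2))).symm
  have hY : (β.val / 2^(s-2) + dB.val * j) % 4 = (β.val / 2^(s-2) + dB.val % 4 * j) % 4 :=
    (((Nat.mod_modEq dB.val 4).mul_right j).add_left (β.val / 2^(s-2))).symm
  rw [hX, hY, hgf ⟨j, hj4⟩]
  have habs : ∀ L G : ℕ, L + 2^(s-2) * (G % 4) ≡ L + 2^(s-2) * G [MOD 2^s] := by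
    intro L G
    rw [← hP4]
    exact ((Nat.mod_modEq G 4).mul_left' _).add_left _
  have hmodeq := habs ((α.val % 2^(s-2)) ^^^ (β.val % 2^(s-2))) (g.val + f.val * j)
  rw [(ZMod.natCast_eq_natCast_iff _ _ _).mpr hmodeq]
  push_cast
  ring


-- ===== PhiMap lemmas =====
lemma PhiMap_add {s : ℕ} {ι : Type} (x y : ι → ZMod (2^s)) :
    PhiMap s x + PhiMap s y = PhiMap s (fun i => zxor s (x i) (y i)) := by
  funext p
  exact gray_zxor s (x p.1) (y p.1) p.2

lemma PhiMap_injective {s : ℕ} (hs1 : 1 ≤ s) {ι : Type} :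
    Function.Injective (PhiMap (ι := ι) s) := by
  intro x y h
  funext i
  apply gray_injective s hs1
  funext y'
  exact congrFun h (i, y')

lemma lin_iff {s : ℕ} (hs1 : 1 ≤ s) {ι : Type} (H : AddSubgroup (ι → ZMod (2^s))) :
    IsLinearCode (PhiMap s '' (H : Set (ι → ZMod (2^s)))) ↔
      ∀ x ∈ H, ∀ y ∈ H, (fun i => zxor s (x i) (y i)) ∈ H := by
  constructor
  · intro hlin x hx y hy
    obtain ⟨w, hw, hweq⟩ := hlin _ ⟨x, hx, rfl⟩ _ ⟨y, hy, rfl⟩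
    have heq : PhiMap s x + PhiMap s y = PhiMap s (fun i => zxor s (x i) (y i)) :=
      PhiMap_add x y
    have := PhiMap_injective hs1 (hweq.trans heq)
    rwa [← this]
  · intro hcl
    rintro _ ⟨x, hx, rfl⟩ _ ⟨y, hy, rfl⟩
    exact ⟨_, hcl x hx y hy, (PhiMap_add x y).symm⟩

-- ===== membership in the Hadamard code =====
lemma mem_had_iff {s : ℕ} {t : ℕ → ℕ} (x : ColIdx s t → ZMod (2^s)) :
    x ∈ hadamardCode s t ↔
      ∃ a : Fin (tauSum s t) → ZMod (2^s), x = fun z => ∑ q, a q * z.val q := by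
  constructor
  · intro hx
    refine AddSubgroup.closure_induction
      (p := fun g _ => ∃ a : Fin (tauSum s t) → ZMod (2^s), g = fun z => ∑ q, a q * z.val q)
      ?_ ?_ ?_ ?_ hx
    · rintro _ ⟨q, rfl⟩
      refine ⟨Pi.single q 1, funext fun z => ?_⟩
      simp [Pi.single_apply, ite_mul]
    · exact ⟨0, by funext z; simp⟩
    · rintro f g - - ⟨a, rfl⟩ ⟨b, rfl⟩
      exact ⟨a + b, by funext z; simp [add_mul, Finset.sum_add_distrib]⟩
    · rintro f - ⟨a, rfl⟩
      exact ⟨-a, by funext z; simp [neg_mul, Finset.sum_neg_distrib]⟩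
  · rintro ⟨a, rfl⟩
    have hrw : (fun z : ColIdx s t => ∑ q, a q * z.val q)
        = ∑ q : Fin (tauSum s t), (a q).val • (fun z : ColIdx s t => z.val q) := by
      funext z
      rw [Finset.sum_apply]
      refine Finset.sum_congr rfl fun q _ => ?_
      simp only [Pi.smul_apply, nsmul_eq_mul]
      rw [ZMod.natCast_rightInverse (a q)]
    rw [hrw]
    exact AddSubgroup.sum_mem _ fun q _ =>
      AddSubgroup.nsmul_mem _ (AddSubgroup.subset_closure (Set.mem_range_self q)) _

-- ===== partial sums and blocks =====
lemma Sp_mono (t : ℕ → ℕ) {i i' : ℕ} (h : i ≤ i') :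
    ∑ j ∈ Finset.Icc 1 i, t j ≤ ∑ j ∈ Finset.Icc 1 i', t j :=
  Finset.sum_le_sum_of_subset (Finset.Icc_subset_Icc_right h)

lemma blockIdx_eq (t : ℕ → ℕ) {i p : ℕ} (hi : 1 ≤ i)
    (hlt : ∑ j ∈ Finset.Icc 1 (i-1), t j < p) (hle : p ≤ ∑ j ∈ Finset.Icc 1 i, t j) :
    blockIdx t p = i := by
  have hmem : i ∈ {j : ℕ | 1 ≤ j ∧ p ≤ ∑ k ∈ Finset.Icc 1 j, t k} := ⟨hi, hle⟩
  refine le_antisymm (Nat.sInf_le hmem) (le_csInf ⟨i, hmem⟩ ?_)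
  rintro j ⟨hj1, hjp⟩
  by_contra hji
  push_neg at hji
  have : ∑ k ∈ Finset.Icc 1 j, t k ≤ ∑ k ∈ Finset.Icc 1 (i-1), t k := Sp_mono t (by omega)
  omega

lemma zero_mem_Tset (s i : ℕ) : (0 : ZMod (2^s)) ∈ Tset s i :=
  ⟨0, by positivity, by simp⟩

-- ===== sum splitting =====
lemma sum_split1 {n : ℕ} {M : Type} [AddCommMonoid M] (i0 : Fin n) (f : Fin n → M) :
    ∑ q, f q = f i0 + ∑ q ∈ Finset.univ.erase i0, f q :=
  (Finset.add_sum_erase _ f (Finset.mem_univ i0)).symm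

lemma sum_split2 {n : ℕ} {M : Type} [AddCommMonoid M] (i0 i1 : Fin n) (h : i0 ≠ i1)
    (f : Fin n → M) :
    ∑ q, f q = f i0 + f i1 + ∑ q ∈ (Finset.univ.erase i0).erase i1, f q := by
  rw [sum_split1 i0 f, add_assoc]
  congr 1
  exact (Finset.add_sum_erase _ f (Finset.mem_erase.mpr ⟨h.symm, Finset.mem_univ i1⟩)).symm

lemma sum_split3 {n : ℕ} {M : Type} [AddCommMonoid M] (i0 i1 i2 : Fin n)
    (h01 : i0 ≠ i1) (h02 : i0 ≠ i2) (h12 : i1 ≠ i2) (f : Fin n → M) :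
    ∑ q, f q = f i0 + f i1 + f i2 + ∑ q ∈ ((Finset.univ.erase i0).erase i1).erase i2, f q := by
  rw [sum_split2 i0 i1 h01 f, add_assoc (f i0 + f i1)]
  congr 1
  refine (Finset.add_sum_erase _ f ?_).symm
  exact Finset.mem_erase.mpr ⟨h12.symm, Finset.mem_erase.mpr ⟨h02.symm, Finset.mem_univ i2⟩⟩

-- ===== column constructions =====
lemma col1_spec (s : ℕ) (t : ℕ → ℕ) (h0 : 0 < tauSum s t) (q0 : Fin (tauSum s t))
    (hq0 : 1 ≤ (q0 : ℕ)) (x : ZMod (2^s)) (hx : x ∈ Tset s (blockIdx t ((q0 : ℕ) + 1))) :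
    ∃ z : ColIdx s t, ∀ c : Fin (tauSum s t) → ZMod (2^s),
      ∑ q, c q * z.val q = c ⟨0, h0⟩ + c q0 * x := by
  have hne : (⟨0, h0⟩ : Fin (tauSum s t)) ≠ q0 := by
    intro h
    have := congrArg Fin.val h
    simp at this
    omega
  refine ⟨⟨fun q => if q = ⟨0, h0⟩ then 1 else if q = q0 then x else 0, ?_, ?_⟩, ?_⟩
  · intro q hq
    have : q = ⟨0, h0⟩ := Fin.ext hq
    simp [this]
  · intro q hq
    have h1 : q ≠ ⟨0, h0⟩ := by
      intro h
      rw [h] at hq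
      simp at hq
    dsimp only
    rw [if_neg h1]
    by_cases h2 : q = q0
    · subst h2
      rw [if_pos rfl]
      exact hx
    · rw [if_neg h2]
      exact zero_mem_Tset s _
  · intro c
    rw [sum_split2 ⟨0, h0⟩ q0 hne (fun q => c q * _)]
    have hrest : ∑ q ∈ (Finset.univ.erase ⟨0, h0⟩).erase q0,
        c q * (if q = ⟨0, h0⟩ then 1 else if q = q0 then x else 0) = 0 := by
      refine Finset.sum_eq_zero fun q hq => ?_
      rw [Finset.mem_erase, Finset.mem_erase] at hq
      rw [if_neg hq.2.1, if_neg hq.1, mul_zero]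
    dsimp only
    rw [hrest, add_zero, if_pos rfl, if_neg hne.symm, if_pos rfl, mul_one]

lemma col2_spec (s : ℕ) (t : ℕ → ℕ) (h0 : 0 < tauSum s t) (q0 q1 : Fin (tauSum s t))
    (hq0 : 1 ≤ (q0 : ℕ)) (hq1 : 1 ≤ (q1 : ℕ)) (hne01 : q0 ≠ q1)
    (x : ZMod (2^s)) (hx : x ∈ Tset s (blockIdx t ((q0 : ℕ) + 1)))
    (x' : ZMod (2^s)) (hx' : x' ∈ Tset s (blockIdx t ((q1 : ℕ) + 1))) :
    ∃ z : ColIdx s t, ∀ c : Fin (tauSum s t) → ZMod (2^s),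
      ∑ q, c q * z.val q = c ⟨0, h0⟩ + c q0 * x + c q1 * x' := by
  have hne : (⟨0, h0⟩ : Fin (tauSum s t)) ≠ q0 := by
    intro h; have := congrArg Fin.val h; simp at this; omega
  have hne' : (⟨0, h0⟩ : Fin (tauSum s t)) ≠ q1 := by
    intro h; have := congrArg Fin.val h; simp at this; omega
  refine ⟨⟨fun q => if q = ⟨0, h0⟩ then 1 else if q = q0 then x else if q = q1 then x' else 0,
    ?_, ?_⟩, ?_⟩
  · intro q hq
    have : q = ⟨0, h0⟩ := Fin.ext hq
    simp [this]
  · intro q hq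
    have h1 : q ≠ ⟨0, h0⟩ := by
      intro h; rw [h] at hq; simp at hq
    dsimp only
    rw [if_neg h1]
    by_cases h2 : q = q0
    · subst h2; rw [if_pos rfl]; exact hx
    · rw [if_neg h2]
      by_cases h3 : q = q1
      · subst h3; rw [if_pos rfl]; exact hx'
      · rw [if_neg h3]; exact zero_mem_Tset s _
  · intro c
    rw [sum_split3 ⟨0, h0⟩ q0 q1 hne hne' hne01 (fun q => c q * _)]
    have hrest : ∑ q ∈ ((Finset.univ.erase ⟨0, h0⟩).erase q0).erase q1,
        c q * (if q = ⟨0, h0⟩ then 1 else if q = q0 then x else if q = q1 then x' else 0) = 0 := by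
      refine Finset.sum_eq_zero fun q hq => ?_
      rw [Finset.mem_erase, Finset.mem_erase, Finset.mem_erase] at hq
      rw [if_neg hq.2.2.1, if_neg hq.2.1, if_neg hq.1, mul_zero]
    dsimp only
    rw [hrest, add_zero, if_pos rfl, if_neg hne.symm, if_pos rfl,
      if_neg hne'.symm, if_neg hne01.symm, if_pos rfl, mul_one]

-- ===== necessity =====
section Necessity

variable {s : ℕ} {t : ℕ → ℕ}

lemma pow_ge8 (hs : 2 < s) : 8 ≤ 2^s := by
  calc (8:ℕ) = 2^3 := rfl
  _ ≤ 2^s := Nat.pow_le_pow_right (by norm_num) (by omega)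

lemma S1_eq : ∑ j ∈ Finset.Icc 1 1, t j = t 1 := by simp

lemma tauSum_ge (hs : 1 ≤ s) : t 1 ≤ tauSum s t := by
  calc t 1 = ∑ j ∈ Finset.Icc 1 1, t j := by simp
  _ ≤ _ := Sp_mono t hs

lemma nec1 (hs : 2 < s) (ht1 : 2 ≤ t 1)
    (hyp : ∀ a b : Fin (tauSum s t) → ZMod (2^s), ∃ c : Fin (tauSum s t) → ZMod (2^s),
      ∀ z : ColIdx s t,
      zxor s (∑ q, a q * z.val q) (∑ q, b q * z.val q) = ∑ q, c q * z.val q) : False := by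
  have h8 := pow_ge8 hs
  have hτ : 2 ≤ tauSum s t := le_trans ht1 (tauSum_ge (by omega))
  set τ := tauSum s t with hτdef
  let i0 : Fin τ := ⟨0, by omega⟩
  let q0 : Fin τ := ⟨1, by omega⟩
  have hne : i0 ≠ q0 := by
    intro h; have := congrArg Fin.val h; simp [i0, q0] at this
  have hblock : blockIdx t ((q0 : ℕ) + 1) = 1 := by
    refine blockIdx_eq t le_rfl (by simp) ?_
    rw [S1_eq]
    exact_mod_cast ht1
  have hxmem : ∀ j : ℕ, j < 2^s → ((j : ZMod (2^s))) ∈ Tset s (blockIdx t ((q0 : ℕ) + 1)) := by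
    intro j hj
    rw [hblock]
    refine ⟨j, ?_, by simp⟩
    have : s - 1 + 1 = s := by omega
    rw [this]
    exact hj
  let a : Fin τ → ZMod (2^s) := fun q => if q = q0 then 1 else 0
  let b : Fin τ → ZMod (2^s) := fun q => if q = i0 then 1 else if q = q0 then 1 else 0
  obtain ⟨c, hc⟩ := hyp a b
  have heq : ∀ j : ℕ, j < 2^s →
      zxor s ((j : ZMod (2^s))) (1 + (j : ZMod (2^s))) = c i0 + c q0 * (j : ZMod (2^s)) := by
    intro j hj
    obtain ⟨z, hz⟩ := col1_spec s t (by omega) q0 (by simp [q0]) _ (hxmem j hj)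
    have h := hc z
    rw [hz a, hz b, hz c] at h
    simpa [a, b, i0, q0, hne, hne.symm] using h
  have heq' : ∀ j : ℕ, 1 + j < 2^s →
      (((j ^^^ (1+j)) : ℕ) : ZMod (2^s)) = c i0 + c q0 * (j : ZMod (2^s)) := by
    intro j hj
    rw [← zxor_natCast (s := s) (by omega) hj]
    push_cast
    exact heq j (by omega)
  have h0 := heq' 0 (by omega)
  have h1 := heq' 1 (by omega)
  have h2 := heq' 2 (by omega)
  rw [show (0:ℕ) ^^^ (1+0) = 1 by decide] at h0
  rw [show (1:ℕ) ^^^ (1+1) = 3 by decide] at h1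
  rw [show (2:ℕ) ^^^ (1+2) = 1 by decide] at h2
  have h4 : ((4:ℕ) : ZMod (2^s)) = 0 := by
    push_cast at h0 h1 h2 ⊢
    linear_combination 2*h1 - h0 - h2
  rw [ZMod.natCast_eq_zero_iff] at h4
  exact absurd (Nat.le_of_dvd (by norm_num) h4) (by omega)

lemma nec2 (hs : 2 < s) (ht1 : 1 ≤ t 1) {i : ℕ} (h2i : 2 ≤ i) (his : i ≤ s - 2)
    (hti : 1 ≤ t i)
    (hyp : ∀ a b : Fin (tauSum s t) → ZMod (2^s), ∃ c : Fin (tauSum s t) → ZMod (2^s),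
      ∀ z : ColIdx s t,
      zxor s (∑ q, a q * z.val q) (∑ q, b q * z.val q) = ∑ q, c q * z.val q) : False := by
  have h8 := pow_ge8 hs
  have hSi : ∑ j ∈ Finset.Icc 1 i, t j = (∑ j ∈ Finset.Icc 1 (i-1), t j) + t i := by
    rw [show i = (i-1)+1 by omega, Finset.sum_Icc_succ_top (by omega)]
    rw [show i - 1 + 1 - 1 = i - 1 by omega]
  have hS1le : t 1 ≤ ∑ j ∈ Finset.Icc 1 (i-1), t j := by
    calc t 1 = ∑ j ∈ Finset.Icc 1 1, t j := by simp
    _ ≤ _ := Sp_mono t (by omega)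
  have hSiτ : ∑ j ∈ Finset.Icc 1 i, t j ≤ tauSum s t := Sp_mono t (by omega)
  have hτ : ∑ j ∈ Finset.Icc 1 (i-1), t j < tauSum s t := by omega
  set τ := tauSum s t with hτdef
  let i0 : Fin τ := ⟨0, by omega⟩
  let q0 : Fin τ := ⟨∑ j ∈ Finset.Icc 1 (i-1), t j, hτ⟩
  have hq0v : (q0 : ℕ) = ∑ j ∈ Finset.Icc 1 (i-1), t j := rfl
  have hq01 : 1 ≤ (q0 : ℕ) := by rw [hq0v]; omega
  have hne : i0 ≠ q0 := by
    intro h; have := congrArg Fin.val h; simp only [i0, q0] at this; omega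
  have hblock : blockIdx t ((q0 : ℕ) + 1) = i :=
    blockIdx_eq t (by omega) (by omega) (by omega)
  have hxmem : ∀ j : ℕ, j < 2^(s-i+1) →
      ((j : ZMod (2^s)) * 2^(i-1)) ∈ Tset s (blockIdx t ((q0 : ℕ) + 1)) := by
    intro j hj
    rw [hblock]
    exact ⟨j, hj, rfl⟩
  have hpow3 : (8:ℕ) ≤ 2^(s-i+1) := by
    calc (8:ℕ) = 2^3 := rfl
    _ ≤ _ := Nat.pow_le_pow_right (by norm_num) (by omega)
  let a : Fin τ → ZMod (2^s) := fun q => if q = q0 then 1 else 0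
  let b : Fin τ → ZMod (2^s) := fun q => if q = i0 then (2:ZMod (2^s))^(i-1)
    else if q = q0 then 1 else 0
  obtain ⟨c, hc⟩ := hyp a b
  have heq : ∀ j : ℕ, j < 2^(s-i+1) →
      zxor s ((j : ZMod (2^s)) * 2^(i-1)) ((2:ZMod (2^s))^(i-1) + (j : ZMod (2^s)) * 2^(i-1))
        = c i0 + c q0 * ((j : ZMod (2^s)) * 2^(i-1)) := by
    intro j hj
    obtain ⟨z, hz⟩ := col1_spec s t (by omega) q0 hq01 _ (hxmem j hj)
    have h := hc z
    rw [hz a, hz b, hz c] at h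
    simpa [a, b, i0, q0, hne, hne.symm, Fin.ext_iff,
      (show (0:ℕ) ≠ ∑ j ∈ Finset.Icc 1 (i-1), t j by omega),
      (show ¬(∑ j ∈ Finset.Icc 1 (i-1), t j = 0) by omega)] using h
  have hbound : ∀ j : ℕ, j ≤ 3 → j * 2^(i-1) < 2^s := by
    intro j hj
    have h1 : (4:ℕ) * 2^(i-1) = 2^(i+1) := by
      rw [show i+1 = (i-1)+2 by omega, pow_add]; ring
    have h2 : (2:ℕ)^(i+1) ≤ 2^s := Nat.pow_le_pow_right (by norm_num) (by omega)
    have h3 : j * 2^(i-1) < 4 * 2^(i-1) := by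
      have : (0:ℕ) < 2^(i-1) := by positivity
      calc j * 2^(i-1) ≤ 3 * 2^(i-1) := Nat.mul_le_mul_right _ hj
      _ < 4 * 2^(i-1) := by omega
    omega
  have heq' : ∀ j : ℕ, j ≤ 2 →
      ((((j ^^^ (1+j)) * 2^(i-1)) : ℕ) : ZMod (2^s))
        = c i0 + c q0 * ((j * 2^(i-1) : ℕ) : ZMod (2^s)) := by
    intro j hj
    rw [← mulpow_xor, ← zxor_natCast (s := s) (hbound j (by omega)) (hbound (1+j) (by omega))]
    push_cast
    rw [add_mul, one_mul]
    exact heq j (by omega)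
  have h0 := heq' 0 (by omega)
  have h1 := heq' 1 (by omega)
  have h2 := heq' 2 (by omega)
  rw [show (0:ℕ) ^^^ (1+0) = 1 by decide] at h0
  rw [show (1:ℕ) ^^^ (1+1) = 3 by decide] at h1
  rw [show (2:ℕ) ^^^ (1+2) = 1 by decide] at h2
  have h4 : ((4 * 2^(i-1) : ℕ) : ZMod (2^s)) = 0 := by
    push_cast at h0 h1 h2 ⊢
    linear_combination 2*h1 - h0 - h2
  rw [ZMod.natCast_eq_zero_iff] at h4
  have hle := Nat.le_of_dvd (by positivity) h4
  have h1' : (4:ℕ) * 2^(i-1) = 2^(i+1) := by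
    rw [show i+1 = (i-1)+2 by omega, pow_add]; ring
  have h2' : (2:ℕ)^(i+1) < 2^s := Nat.pow_lt_pow_right (by norm_num) (by omega)
  omega

lemma nec3 (hs : 2 < s) (ht1 : 1 ≤ t 1) (hts : 2 ≤ t (s-1))
    (hyp : ∀ a b : Fin (tauSum s t) → ZMod (2^s), ∃ c : Fin (tauSum s t) → ZMod (2^s),
      ∀ z : ColIdx s t,
      zxor s (∑ q, a q * z.val q) (∑ q, b q * z.val q) = ∑ q, c q * z.val q) : False := by
  have h8 := pow_ge8 hs
  have hSs1 : ∑ j ∈ Finset.Icc 1 (s-1), t j = (∑ j ∈ Finset.Icc 1 (s-2), t j) + t (s-1) := by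
    rw [show s-1 = (s-2)+1 by omega, Finset.sum_Icc_succ_top (by omega)]
  have hS1le : t 1 ≤ ∑ j ∈ Finset.Icc 1 (s-2), t j := by
    calc t 1 = ∑ j ∈ Finset.Icc 1 1, t j := by simp
    _ ≤ _ := Sp_mono t (by omega)
  have hSsτ : ∑ j ∈ Finset.Icc 1 (s-1), t j ≤ tauSum s t := Sp_mono t (by omega)
  have hτ0 : ∑ j ∈ Finset.Icc 1 (s-2), t j < tauSum s t := by omega
  have hτ1 : (∑ j ∈ Finset.Icc 1 (s-2), t j) + 1 < tauSum s t := by omega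
  set τ := tauSum s t with hτdef
  let i0 : Fin τ := ⟨0, by omega⟩
  let q0 : Fin τ := ⟨∑ j ∈ Finset.Icc 1 (s-2), t j, hτ0⟩
  let q1 : Fin τ := ⟨(∑ j ∈ Finset.Icc 1 (s-2), t j) + 1, hτ1⟩
  have hq0v : (q0 : ℕ) = ∑ j ∈ Finset.Icc 1 (s-2), t j := rfl
  have hq1v : (q1 : ℕ) = (∑ j ∈ Finset.Icc 1 (s-2), t j) + 1 := rfl
  have hi0v : (i0 : ℕ) = 0 := rfl
  have hq01 : 1 ≤ (q0 : ℕ) := by rw [hq0v]; omega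
  have hq11 : 1 ≤ (q1 : ℕ) := by rw [hq1v]; omega
  have hne0 : i0 ≠ q0 := Fin.ne_of_val_ne (by omega)
  have hne1 : i0 ≠ q1 := Fin.ne_of_val_ne (by omega)
  have hne01 : q0 ≠ q1 := Fin.ne_of_val_ne (by omega)
  have hblock0 : blockIdx t ((q0 : ℕ) + 1) = s - 1 :=
    blockIdx_eq t (by omega) (by rw [show s-1-1 = s-2 by omega]; omega) (by omega)
  have hblock1 : blockIdx t ((q1 : ℕ) + 1) = s - 1 :=
    blockIdx_eq t (by omega) (by rw [show s-1-1 = s-2 by omega]; omega) (by omega)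
  have hxmem0 : ∀ j : ℕ, j < 4 →
      ((j : ZMod (2^s)) * 2^(s-2)) ∈ Tset s (blockIdx t ((q0 : ℕ) + 1)) := by
    intro j hj
    rw [hblock0]
    refine ⟨j, ?_, ?_⟩
    · rw [show s - (s-1) + 1 = 2 by omega]; omega
    · rw [show s - 1 - 1 = s - 2 by omega]
  have hxmem1 : ∀ j : ℕ, j < 4 →
      ((j : ZMod (2^s)) * 2^(s-2)) ∈ Tset s (blockIdx t ((q1 : ℕ) + 1)) := by
    intro j hj
    rw [hblock1]
    refine ⟨j, ?_, ?_⟩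
    · rw [show s - (s-1) + 1 = 2 by omega]; omega
    · rw [show s - 1 - 1 = s - 2 by omega]
  let a : Fin τ → ZMod (2^s) := fun q => if q = q0 then 1 else if q = q1 then 1 else 0
  let b : Fin τ → ZMod (2^s) := fun q => if q = q0 then 1 else 0
  obtain ⟨c, hc⟩ := hyp a b
  have heq : ∀ j j' : ℕ, j < 4 → j' < 4 →
      zxor s ((j : ZMod (2^s)) * 2^(s-2) + (j' : ZMod (2^s)) * 2^(s-2))
        ((j : ZMod (2^s)) * 2^(s-2))
        = c i0 + c q0 * ((j : ZMod (2^s)) * 2^(s-2))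
          + c q1 * ((j' : ZMod (2^s)) * 2^(s-2)) := by
    intro j j' hj hj'
    obtain ⟨z, hz⟩ := col2_spec s t (by omega) q0 q1 hq01 hq11 hne01
      _ (hxmem0 j hj) _ (hxmem1 j' hj')
    have h := hc z
    rw [hz a, hz b, hz c] at h
    simpa [a, b, i0, q0, q1, hne0, hne0.symm, hne1, hne1.symm, hne01, hne01.symm,
      Fin.ext_iff,
      (show (0:ℕ) ≠ ∑ j ∈ Finset.Icc 1 (s-2), t j by omega),
      (show ¬(∑ j ∈ Finset.Icc 1 (s-2), t j = 0) by omega)] using h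
  have hbound : ∀ j : ℕ, j ≤ 3 → j * 2^(s-2) < 2^s := by
    intro j hj
    have h1 : (4:ℕ) * 2^(s-2) = 2^s := by
      rw [show s = (s-2)+2 by omega, pow_add]
      rw [show (s - 2 + 2 - 2) = s - 2 by omega]
      ring
    have : (0:ℕ) < 2^(s-2) := by positivity
    have h3 : j * 2^(s-2) ≤ 3 * 2^(s-2) := Nat.mul_le_mul_right _ hj
    omega
  have heq' : ∀ j j' : ℕ, j ≤ 1 → j' ≤ 1 →
      ((((j + j') ^^^ j) * 2^(s-2) : ℕ) : ZMod (2^s))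
        = c i0 + c q0 * ((j * 2^(s-2) : ℕ) : ZMod (2^s))
          + c q1 * ((j' * 2^(s-2) : ℕ) : ZMod (2^s)) := by
    intro j j' hj hj'
    rw [← mulpow_xor, ← zxor_natCast (s := s) ?hb1 ?hb2]
    case hb1 =>
      have := hbound (j + j') (by omega)
      simpa [add_mul] using this
    case hb2 => exact hbound j (by omega)
    push_cast
    rw [add_mul]
    push_cast
    exact heq j j' (by omega) (by omega)
  have h00 := heq' 0 0 (by omega) (by omega)
  have h10 := heq' 1 0 (by omega) (by omega)
  have h01 := heq' 0 1 (by omega) (by omega)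
  have h11 := heq' 1 1 (by omega) (by omega)
  rw [show (0+0) ^^^ 0 = 0 by decide] at h00
  rw [show (1+0) ^^^ 1 = 0 by decide] at h10
  rw [show (0+1) ^^^ 0 = 1 by decide] at h01
  rw [show (1+1) ^^^ 1 = 3 by decide] at h11
  have h4 : ((2 * 2^(s-2) : ℕ) : ZMod (2^s)) = 0 := by
    push_cast at h00 h10 h01 h11 ⊢
    linear_combination h11 - h10 - h01 + h00
  rw [ZMod.natCast_eq_zero_iff] at h4
  have hle := Nat.le_of_dvd (by positivity) h4
  have h1' : (2:ℕ) * 2^(s-2) = 2^(s-1) := by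
    rw [show s-1 = (s-2)+1 by omega, pow_add]; ring
  have h2' : (2:ℕ)^(s-1) < 2^s := Nat.pow_lt_pow_right (by norm_num) (by omega)
  omega

end Necessity

-- ===== sufficiency =====
section Sufficiency

variable {s : ℕ} {t : ℕ → ℕ}

lemma suff (hs : 2 < s) (ht1 : t 1 = 1) (hmid : ∀ i, 2 ≤ i → i ≤ s-2 → t i = 0)
    (hts : t (s-1) ≤ 1) :
    ∀ a b : Fin (tauSum s t) → ZMod (2^s), ∃ c : Fin (tauSum s t) → ZMod (2^s),
      ∀ z : ColIdx s t,
      zxor s (∑ q, a q * z.val q) (∑ q, b q * z.val q) = ∑ q, c q * z.val q := by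
  have hs1 : 1 ≤ s := by omega
  have hSs2 : ∑ j ∈ Finset.Icc 1 (s-2), t j = 1 := by
    rw [Finset.sum_eq_single_of_mem 1 (Finset.mem_Icc.mpr (by omega))]
    · exact ht1
    · intro j hj hne
      rw [Finset.mem_Icc] at hj
      exact hmid j (by omega) (by omega)
  have hSs1 : ∑ j ∈ Finset.Icc 1 (s-1), t j = 1 + t (s-1) := by
    rw [show s-1 = (s-2)+1 by omega, Finset.sum_Icc_succ_top (by omega)]
    rw [show s-2+1 = s-1 by omega, hSs2]
  have hτ1 : 1 + t (s-1) ≤ tauSum s t := by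
    rw [← hSs1]; exact Sp_mono t (by omega)
  have hpos : 0 < tauSum s t := by omega
  have hblockS : ∀ p : ℕ, 1 + t (s-1) < p → p ≤ tauSum s t → blockIdx t p = s := by
    intro p hp1 hp2
    refine blockIdx_eq t (by omega) ?_ hp2
    rw [show s - 1 = s - 1 by rfl, hSs1]
    omega
  -- members of block s lie in the ideal (2^(s-1))
  have hspan : ∀ (z : ColIdx s t) (q : Fin (tauSum s t)), 1 + t (s-1) < (q:ℕ) + 1 →
      z.val q ∈ Ideal.span {(2:ZMod (2^s))^(s-1)} := by
    intro z q hq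
    have hmem := z.prop.2 q (by omega)
    rw [hblockS _ hq (by omega)] at hmem
    obtain ⟨j, hj, hx⟩ := hmem
    rw [show s - 1 = s - 1 by rfl] at hx
    exact Ideal.mem_span_singleton'.mpr ⟨(j : ZMod (2^s)), hx.symm⟩
  intro a b
  rcases Nat.le_one_iff_eq_zero_or_eq_one.mp hts with hts0 | hts1
  · -- t (s-1) = 0
    set γ := zxor s (a ⟨0, hpos⟩) (b ⟨0, hpos⟩) with hγ
    refine ⟨fun q => if q = ⟨0, hpos⟩ then γ else a q + b q, ?_⟩
    intro z
    have hz0 : z.val ⟨0, hpos⟩ = 1 := z.prop.1 _ rfl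
    have hRmem : ∀ f : Fin (tauSum s t) → ZMod (2^s),
        (∑ q ∈ Finset.univ.erase ⟨0, hpos⟩, f q * z.val q)
          ∈ Ideal.span {(2:ZMod (2^s))^(s-1)} := by
      intro f
      refine Ideal.sum_mem _ fun q hq => ?_
      rw [Finset.mem_erase] at hq
      have hq1 : 1 ≤ (q : ℕ) := by
        rcases Nat.eq_zero_or_pos (q : ℕ) with h | h
        · exact absurd (Fin.ext h) hq.1
        · omega
      exact Ideal.mul_mem_left _ _ (hspan z q (by omega))
    obtain ⟨ea, hea⟩ := Ideal.mem_span_singleton'.mp (hRmem a)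
    obtain ⟨eb, heb⟩ := Ideal.mem_span_singleton'.mp (hRmem b)
    have hA : ∑ q, a q * z.val q = a ⟨0, hpos⟩ + 2^(s-1) * ea := by
      rw [sum_split1 ⟨0, hpos⟩, hz0, mul_one, mul_comm ((2:ZMod (2^s))^(s-1)) ea, hea]
    have hB : ∑ q, b q * z.val q = b ⟨0, hpos⟩ + 2^(s-1) * eb := by
      rw [sum_split1 ⟨0, hpos⟩, hz0, mul_one, mul_comm ((2:ZMod (2^s))^(s-1)) eb, heb]
    have hC : ∑ q, (if q = ⟨0, hpos⟩ then γ else a q + b q) * z.val q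
        = γ + (2^(s-1) * ea + 2^(s-1) * eb) := by
      rw [sum_split1 ⟨0, hpos⟩, hz0, mul_one, if_pos rfl]
      congr 1
      have : ∑ q ∈ Finset.univ.erase ⟨0, hpos⟩,
          (if q = ⟨0, hpos⟩ then γ else a q + b q) * z.val q
          = (∑ q ∈ Finset.univ.erase ⟨0, hpos⟩, a q * z.val q)
            + ∑ q ∈ Finset.univ.erase ⟨0, hpos⟩, b q * z.val q := by
        rw [← Finset.sum_add_distrib]
        refine Finset.sum_congr rfl fun q hq => ?_
        rw [Finset.mem_erase] at hq
        rw [if_neg hq.1, add_mul]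
      rw [this, mul_comm ((2:ZMod (2^s))^(s-1)) ea, hea, mul_comm ((2:ZMod (2^s))^(s-1)) eb, heb]
    rw [hA, hB, hC, zxor_top hs1]
    ring
  · -- t (s-1) = 1
    have hτ2 : 2 ≤ tauSum s t := by omega
    have h1lt : 1 < tauSum s t := by omega
    have hblock1 : blockIdx t 2 = s - 1 := by
      refine blockIdx_eq t (by omega) ?_ ?_
      · rw [show s - 1 - 1 = s - 2 by omega, hSs2]
        norm_num
      · rw [hSs1]
        omega
    obtain ⟨γ, δ, hkey⟩ := keyB hs (a ⟨0, hpos⟩) (b ⟨0, hpos⟩) (a ⟨1, h1lt⟩) (b ⟨1, h1lt⟩)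
    have hne : (⟨0, hpos⟩ : Fin (tauSum s t)) ≠ ⟨1, h1lt⟩ := Fin.ne_of_val_ne (by simp)
    refine ⟨fun q => if q = ⟨0, hpos⟩ then γ else if q = ⟨1, h1lt⟩ then δ else a q + b q, ?_⟩
    intro z
    have hz0 : z.val ⟨0, hpos⟩ = 1 := z.prop.1 _ rfl
    have hxmem : z.val ⟨1, h1lt⟩ ∈ Tset s (s-1) := by
      have := z.prop.2 ⟨1, h1lt⟩ (by norm_num)
      rwa [show ((⟨1, h1lt⟩ : Fin (tauSum s t)) : ℕ) + 1 = 2 from rfl, hblock1] at this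
    set x := z.val ⟨1, h1lt⟩ with hxdef
    have hRmem : ∀ f : Fin (tauSum s t) → ZMod (2^s),
        (∑ q ∈ (Finset.univ.erase ⟨0, hpos⟩).erase ⟨1, h1lt⟩, f q * z.val q)
          ∈ Ideal.span {(2:ZMod (2^s))^(s-1)} := by
      intro f
      refine Ideal.sum_mem _ fun q hq => ?_
      rw [Finset.mem_erase, Finset.mem_erase] at hq
      have hq1 : 2 ≤ (q : ℕ) := by
        rcases Nat.lt_or_ge (q : ℕ) 2 with h | h
        · interval_cases h' : (q : ℕ)
          · exact absurd (Fin.ext h') hq.2.1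
          · exact absurd (Fin.ext h') hq.1
        · omega
      exact Ideal.mul_mem_left _ _ (hspan z q (by omega))
    obtain ⟨ea, hea⟩ := Ideal.mem_span_singleton'.mp (hRmem a)
    obtain ⟨eb, heb⟩ := Ideal.mem_span_singleton'.mp (hRmem b)
    have hA : ∑ q, a q * z.val q = (a ⟨0, hpos⟩ + a ⟨1, h1lt⟩ * x) + 2^(s-1) * ea := by
      rw [sum_split2 ⟨0, hpos⟩ ⟨1, h1lt⟩ hne, hz0, mul_one,
        mul_comm ((2:ZMod (2^s))^(s-1)) ea, hea, ← hxdef]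
    have hB : ∑ q, b q * z.val q = (b ⟨0, hpos⟩ + b ⟨1, h1lt⟩ * x) + 2^(s-1) * eb := by
      rw [sum_split2 ⟨0, hpos⟩ ⟨1, h1lt⟩ hne, hz0, mul_one,
        mul_comm ((2:ZMod (2^s))^(s-1)) eb, heb, ← hxdef]
    have hC : ∑ q, (if q = ⟨0, hpos⟩ then γ else if q = ⟨1, h1lt⟩ then δ else a q + b q)
          * z.val q
        = (γ + δ * x) + (2^(s-1) * ea + 2^(s-1) * eb) := by
      rw [sum_split2 ⟨0, hpos⟩ ⟨1, h1lt⟩ hne, hz0, mul_one, if_pos rfl,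
        if_neg hne.symm, if_pos rfl]
      have : ∑ q ∈ (Finset.univ.erase ⟨0, hpos⟩).erase ⟨1, h1lt⟩,
          (if q = ⟨0, hpos⟩ then γ else if q = ⟨1, h1lt⟩ then δ else a q + b q) * z.val q
          = (∑ q ∈ (Finset.univ.erase ⟨0, hpos⟩).erase ⟨1, h1lt⟩, a q * z.val q)
            + ∑ q ∈ (Finset.univ.erase ⟨0, hpos⟩).erase ⟨1, h1lt⟩, b q * z.val q := by
        rw [← Finset.sum_add_distrib]
        refine Finset.sum_congr rfl fun q hq => ?_
        rw [Finset.mem_erase, Finset.mem_erase] at hq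
        rw [if_neg hq.2.1, if_neg hq.1, add_mul]
      rw [this, mul_comm ((2:ZMod (2^s))^(s-1)) ea, hea,
        mul_comm ((2:ZMod (2^s))^(s-1)) eb, heb, ← hxdef]
    rw [hA, hB, hC, zxor_top hs1, hkey x hxmem]
    ring

end Sufficiency

theorem hadamardCode_linear_iff (s : ℕ) (hs : 2 < s) (t : ℕ → ℕ) (ht : 1 ≤ t 1) :
    IsLinearCode (PhiMap s '' (hadamardCode s t : Set (ColIdx s t → ZMod (2^s)))) ↔
      (t 1 = 1 ∧ (∀ i, 2 ≤ i → i ≤ s - 2 → t i = 0) ∧ t (s - 1) ≤ 1) := by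
  have hs1 : 1 ≤ s := by omega
  rw [lin_iff hs1 (hadamardCode s t)]
  constructor
  · intro h
    have hyp : ∀ a b : Fin (tauSum s t) → ZMod (2^s), ∃ c : Fin (tauSum s t) → ZMod (2^s),
        ∀ z : ColIdx s t,
        zxor s (∑ q, a q * z.val q) (∑ q, b q * z.val q) = ∑ q, c q * z.val q := by
      intro a b
      have ha := (mem_had_iff (fun z : ColIdx s t => ∑ q, a q * z.val q)).mpr ⟨a, rfl⟩
      have hb := (mem_had_iff (fun z : ColIdx s t => ∑ q, b q * z.val q)).mpr ⟨b, rfl⟩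
      have hmem := h _ ha _ hb
      obtain ⟨c, hc⟩ := (mem_had_iff _).mp hmem
      exact ⟨c, fun z => congrFun hc z⟩
    refine ⟨?_, ?_, ?_⟩
    · by_contra h1
      exact nec1 hs (by omega) hyp
    · intro i h2 hi
      by_contra h1
      exact nec2 hs ht h2 hi (by omega) hyp
    · by_contra h1
      exact nec3 hs ht (by omega) hyp
  · rintro ⟨h1, h2, h3⟩ x hx y hy
    obtain ⟨a, rfl⟩ := (mem_had_iff _).mp hx
    obtain ⟨b, rfl⟩ := (mem_had_iff _).mp hy
    obtain ⟨c, hc⟩ := suff hs h1 h2 h3 a b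
    exact (mem_had_iff _).mpr ⟨c, funext fun z => hc z⟩
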